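/- Let A ⊆ 2^[n] and B = Δ_{i,j}(A) for distinct i, j ∈ [n]. Then |A*| ≤ |B*|, where F* denotes the family of sets in F intersecting every member of F. -/

import Mathlib

open Finset

variable {n : ℕ}

def delta {α : Type*} [DecidableEq α] (i j : α) (A : Finset α) : Finset α :=
  if j ∈ A ∧ i ∉ A then insert i (A.erase j) else A

def compFam {α : Type*} [DecidableEq α] (i j : α) (𝒜 : Finset (Finset α)) :
    Finset (Finset α) :=
  𝒜.filter (fun A => delta i j A ∈ 𝒜) ∪
    (𝒜.filter (fun A => delta i j A ∉ 𝒜)).image (delta i j)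

/-- `𝒜* `: the members of `𝒜` intersecting every member of `𝒜`. -/
def starPart {α : Type*} [DecidableEq α] (𝒜 : Finset (Finset α)) :
    Finset (Finset α) :=
  𝒜.filter (fun A => ∀ B ∈ 𝒜, (A ∩ B).Nonempty)

section Aux
variable {α : Type*} [DecidableEq α] {i j : α} {𝒜 : Finset (Finset α)} {A B : Finset α}

lemma delta_eq (hj : j ∈ A) (hi : i ∉ A) : delta i j A = insert i (A.erase j) :=
  if_pos ⟨hj, hi⟩

lemma delta_eq_self (h : ¬(j ∈ A ∧ i ∉ A)) : delta i j A = A := if_neg h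

lemma mem_delta {x : α} (hj : j ∈ A) (hi : i ∉ A) :
    x ∈ delta i j A ↔ x = i ∨ (x ∈ A ∧ x ≠ j) := by
  rw [delta_eq hj hi]; simp only [mem_insert, mem_erase]; tauto

lemma mem_compFam :
    B ∈ compFam i j 𝒜 ↔ (B ∈ 𝒜 ∧ delta i j B ∈ 𝒜) ∨
      ∃ C ∈ 𝒜, delta i j C ∉ 𝒜 ∧ B = delta i j C := by
  simp only [compFam, mem_union, mem_filter, mem_image]
  constructor
  · rintro (h | ⟨C, ⟨hC, hdC⟩, rfl⟩)
    · exact Or.inl h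
    · exact Or.inr ⟨C, hC, hdC, rfl⟩
  · rintro (h | ⟨C, hC, hdC, rfl⟩)
    · exact Or.inl h
    · exact Or.inr ⟨C, ⟨hC, hdC⟩, rfl⟩

lemma mem_starPart :
    A ∈ starPart 𝒜 ↔ A ∈ 𝒜 ∧ ∀ B ∈ 𝒜, (A ∩ B).Nonempty := mem_filter

lemma moved_of_delta_not_mem (hC : A ∈ 𝒜) (h : delta i j A ∉ 𝒜) : j ∈ A ∧ i ∉ A := by
  by_contra hcon
  rw [delta_eq_self hcon] at h
  exact h hC


-- still inside section Aux
lemma inter_delta_left_nonempty (hij : i ≠ j) (hj : j ∈ A) (hi : i ∉ A)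
    (hstar : ∀ C ∈ 𝒜, (A ∩ C).Nonempty) (hB : B ∈ 𝒜) (hdB : delta i j B ∈ 𝒜) :
    (delta i j A ∩ B).Nonempty := by
  obtain ⟨x, hx⟩ := hstar B hB
  rw [mem_inter] at hx
  by_cases hxj : x = j
  · -- x = j, so j ∈ B
    subst hxj
    by_cases hiB : i ∈ B
    · exact ⟨i, mem_inter.2 ⟨(mem_delta hj hi).2 (Or.inl rfl), hiB⟩⟩
    · -- j ∈ B, i ∉ B, so delta i j B = insert i (erase j B) ∈ 𝒜
      obtain ⟨y, hy⟩ := hstar _ hdB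
      rw [mem_inter, mem_delta hx.2 hiB] at hy
      rcases hy.2 with rfl | ⟨hyB, hyj⟩
      · exact absurd hy.1 hi
      · exact ⟨y, mem_inter.2 ⟨(mem_delta hj hi).2 (Or.inr ⟨hy.1, hyj⟩), hyB⟩⟩
  · exact ⟨x, mem_inter.2 ⟨(mem_delta hj hi).2 (Or.inr ⟨hx.1, hxj⟩), hx.2⟩⟩

lemma delta_mem_starPart_compFam (hij : i ≠ j) (hj : j ∈ A) (hi : i ∉ A)
    (hA : A ∈ 𝒜) (hstar : ∀ C ∈ 𝒜, (A ∩ C).Nonempty) :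
    ∀ B ∈ compFam i j 𝒜, (delta i j A ∩ B).Nonempty := by
  intro B hB
  rw [mem_compFam] at hB
  rcases hB with ⟨hB, hdB⟩ | ⟨C, hC, hdC, rfl⟩
  · exact inter_delta_left_nonempty hij hj hi hstar hB hdB
  · obtain ⟨hjC, hiC⟩ := moved_of_delta_not_mem hC hdC
    exact ⟨i, mem_inter.2 ⟨(mem_delta hj hi).2 (Or.inl rfl),
      (mem_delta hjC hiC).2 (Or.inl rfl)⟩⟩

lemma key (hij : i ≠ j) (hA : A ∈ starPart 𝒜)
    (hnB : A ∉ starPart (compFam i j 𝒜)) :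
    (j ∈ A ∧ i ∉ A) ∧ delta i j A ∈ starPart (compFam i j 𝒜) ∧
      delta i j A ∉ starPart 𝒜 := by
  rw [mem_starPart] at hA
  obtain ⟨hA𝒜, hstar⟩ := hA
  -- Step a: j ∈ A ∧ i ∉ A
  have hmoved : j ∈ A ∧ i ∉ A := by
    by_contra hcon
    apply hnB
    rw [mem_starPart]
    constructor
    · exact mem_compFam.2 (Or.inl ⟨hA𝒜, by rw [delta_eq_self hcon]; exact hA𝒜⟩)
    · intro B hB
      rw [mem_compFam] at hB
      rcases hB with ⟨hB, _⟩ | ⟨C, hC, hdC, rfl⟩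
      · exact hstar B hB
      · obtain ⟨hjC, hiC⟩ := moved_of_delta_not_mem hC hdC
        obtain ⟨x, hx⟩ := hstar C hC
        rw [mem_inter] at hx
        by_cases hxj : x = j
        · subst hxj
          have hiA : i ∈ A := by tauto
          exact ⟨i, mem_inter.2 ⟨hiA, (mem_delta hjC hiC).2 (Or.inl rfl)⟩⟩
        · exact ⟨x, mem_inter.2 ⟨hx.1, (mem_delta hjC hiC).2 (Or.inr ⟨hx.2, hxj⟩)⟩⟩
  obtain ⟨hj, hi⟩ := hmoved
  refine ⟨⟨hj, hi⟩, ?_, ?_⟩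
  · -- delta i j A ∈ starPart (compFam i j 𝒜)
    rw [mem_starPart]
    refine ⟨?_, delta_mem_starPart_compFam hij hj hi hA𝒜 hstar⟩
    by_cases hdA : delta i j A ∈ 𝒜
    · refine mem_compFam.2 (Or.inl ⟨hdA, ?_⟩)
      have : delta i j (delta i j A) = delta i j A := by
        apply delta_eq_self
        rw [mem_delta hj hi, mem_delta hj hi]
        push_neg
        intro _
        exact Or.inl rfl
      rw [this]; exact hdA
    · exact mem_compFam.2 (Or.inr ⟨A, hA𝒜, hdA, rfl⟩)
  · -- delta i j A ∉ starPart 𝒜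
    by_cases hdA : delta i j A ∈ 𝒜
    · -- A ∈ compFam, so hnB yields a bad witness C
      have hAcomp : A ∈ compFam i j 𝒜 := mem_compFam.2 (Or.inl ⟨hA𝒜, hdA⟩)
      rw [mem_starPart] at hnB
      push_neg at hnB
      simp only [← Finset.not_nonempty_iff_eq_empty] at hnB
      obtain ⟨B0, hB0, hB0empty⟩ := hnB hAcomp
      rw [mem_compFam] at hB0
      rcases hB0 with ⟨hB0, _⟩ | ⟨C, hC, hdC, rfl⟩
      · exact absurd (hstar B0 hB0) hB0empty
      · obtain ⟨hjC, hiC⟩ := moved_of_delta_not_mem hC hdC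
        rw [mem_starPart]
        push_neg
        simp only [← Finset.not_nonempty_iff_eq_empty]
        intro _
        refine ⟨C, hC, ?_⟩
        intro ⟨x, hx⟩
        rw [mem_inter, mem_delta hj hi] at hx
        rcases hx.1 with rfl | ⟨hxA, hxj⟩
        · exact hiC hx.2
        · exact hB0empty ⟨x, mem_inter.2 ⟨hxA,
            (mem_delta hjC hiC).2 (Or.inr ⟨hx.2, hxj⟩)⟩⟩
    · rw [mem_starPart]
      push_neg
      intro h
      exact absurd h hdA

lemma delta_inj_on_moved (hij : i ≠ j) {A₁ A₂ : Finset α}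
    (hj₁ : j ∈ A₁) (hi₁ : i ∉ A₁) (hj₂ : j ∈ A₂) (hi₂ : i ∉ A₂)
    (h : delta i j A₁ = delta i j A₂) : A₁ = A₂ := by
  ext x
  by_cases hxi : x = i
  · subst hxi; simp [hi₁, hi₂]
  by_cases hxj : x = j
  · subst hxj; simp [hj₁, hj₂]
  · have := congrArg (x ∈ ·) h
    simp only [mem_delta hj₁ hi₁, mem_delta hj₂ hi₂, eq_iff_iff] at this
    constructor
    · intro hx
      rcases this.1 (Or.inr ⟨hx, hxj⟩) with rfl | ⟨h2, _⟩
      · exact absurd rfl hxi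
      · exact h2
    · intro hx
      rcases this.2 (Or.inr ⟨hx, hxj⟩) with rfl | ⟨h2, _⟩
      · exact absurd rfl hxi
      · exact h2

end Aux

theorem compression_star_card_le (i j : Fin n) (hij : i ≠ j)
    (𝒜 : Finset (Finset (Fin n))) :
    (starPart 𝒜).card ≤ (starPart (compFam i j 𝒜)).card := by
  classical
  apply Finset.card_le_card_of_injOn
    (fun A => if A ∈ starPart (compFam i j 𝒜) then A else delta i j A)
  · intro A hA
    by_cases h : A ∈ starPart (compFam i j 𝒜)
    · simpa [h] using h
    · simpa [h] using (key hij hA h).2.1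
  · intro A₁ h₁ A₂ h₂ heq
    simp only at heq
    by_cases k₁ : A₁ ∈ starPart (compFam i j 𝒜) <;>
      by_cases k₂ : A₂ ∈ starPart (compFam i j 𝒜)
    · rwa [if_pos k₁, if_pos k₂] at heq
    · rw [if_pos k₁, if_neg k₂] at heq
      obtain ⟨_, _, hne⟩ := key hij h₂ k₂
      rw [← heq] at hne
      exact absurd h₁ hne
    · rw [if_neg k₁, if_pos k₂] at heq
      obtain ⟨_, _, hne⟩ := key hij h₁ k₁
      rw [heq] at hne
      exact absurd h₂ hne
    · rw [if_neg k₁, if_neg k₂] at heq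
      obtain ⟨⟨hj₁, hi₁⟩, _, _⟩ := key hij h₁ k₁
      obtain ⟨⟨hj₂, hi₂⟩, _, _⟩ := key hij h₂ k₂
      exact delta_inj_on_moved hij hj₁ hi₁ hj₂ hi₂ heq
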